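/- arXiv:2604.18299 — 6 statements merged into one kernel-verified Lean document; each statement's English description precedes it below -/
import Mathlib

section
/- If P is a pseudo-substitutable preference profile and every substitutable preference profile admits a pairwise stable allocation, then the market P admits a pairwise stable allocation: S(P) ≠ ∅. -/
variable {X A : Type*} [DecidableEq X] [DecidableEq A]

/-- Contracts in `Y` involving agent `a`. -/
def restrictTo (doc hos : X → A) (a : A) (Y : Finset X) : Finset X :=
  Y.filter (fun c => doc c = a ∨ hos c = a)

def IndRat (doc hos : X → A) (C : A → Finset X → Finset X) (Y : Finset X) : Prop :=
  ∀ a : A, C a Y = restrictTo doc hos a Y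

def Blocks (doc hos : X → A) (C : A → Finset X → Finset X) (Y : Finset X) (x : X) : Prop :=
  x ∉ Y ∧ x ∈ C (doc x) (insert x Y) ∧ x ∈ C (hos x) (insert x Y)

def Stable (doc hos : X → A) (C : A → Finset X → Finset X) (Y : Finset X) : Prop :=
  IndRat doc hos C Y ∧ ∀ x : X, ¬ Blocks doc hos C Y x

/-- Substitutability of a choice function. -/
def Substitutable (C : Finset X → Finset X) : Prop :=
  ∀ (S : Finset X) (x x' : X), x ∈ S → x' ∈ S → x ≠ x' → x' ∈ C S → x' ∈ C (S.erase x)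

/-- `C'` is a sub-preference of `C` for agent `a`. -/
def SubPrefAt (doc hos : X → A) (a : A) (C' C : Finset X → Finset X) : Prop :=
  (∀ S : Finset X, C' S = restrictTo doc hos a S → C S = restrictTo doc hos a S) ∧
  (∀ (S : Finset X) (x : X), C' S = restrictTo doc hos a S → x ∉ S →
      x ∈ C (insert x S) → x ∈ C' (insert x S))

/-- If `P` is a pseudo-substitutable profile (every agent's preference admits a
substitutable sub-preference) and every substitutable profile admits a pairwise stable
allocation, then `S(P) ≠ ∅`. -/
theorem stable_nonempty_of_pseudoSubstitutable
    (doc hos : X → A) (C : A → Finset X → Finset X)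
    (hPseudo : ∀ a : A, ∃ C' : Finset X → Finset X,
        Substitutable C' ∧ SubPrefAt doc hos a C' (C a))
    (hExist : ∀ C' : A → Finset X → Finset X,
        (∀ a : A, Substitutable (C' a)) → ∃ Y : Finset X, Stable doc hos C' Y) :
    ∃ Y : Finset X, Stable doc hos C Y := by
  choose C' hSub hPref using hPseudo
  obtain ⟨Y, hIR, hNB⟩ := hExist C' hSub
  refine ⟨Y, fun a => (hPref a).1 Y (hIR a), fun x hx => ?_⟩
  obtain ⟨hxY, hd, hh⟩ := hx
  exact hNB x ⟨hxY, (hPref (doc x)).2 Y x (hIR (doc x)) hxY hd,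
    (hPref (hos x)).2 Y x (hIR (hos x)) hxY hh⟩
end

section
/- A choice function is substitutable (in the pairwise-removal sense) if and only if it satisfies the inclusion form: for all X' ⊆ X'', C(X'') ∩ X' ⊆ C(X'). -/
variable {X : Type*} [DecidableEq X]

/-- Inclusion form of substitutability. -/
def SubstitutableIncl (C : Finset X → Finset X) : Prop :=
  ∀ S T : Finset X, S ⊆ T → C T ∩ S ⊆ C S

/-- Consistency of a choice function. -/
def Consistent (C : Finset X → Finset X) : Prop :=
  ∀ S T : Finset X, C S ⊆ T → T ⊆ S → C T = C S

/-- A choice function is substitutable in the pairwise-removal sense iff it satisfies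
the inclusion form: for all `S ⊆ T`, `C T ∩ S ⊆ C S`. -/
theorem substitutable_iff_incl (C : Finset X → Finset X)
    (hchoice : ∀ S : Finset X, C S ⊆ S) (hcons : Consistent C) :
    Substitutable C ↔ SubstitutableIncl C := by
  constructor
  · intro hsub S T hST
    induction T using Finset.strongInduction with
    | _ T ih =>
      intro y hy
      simp only [Finset.mem_inter] at hy
      obtain ⟨hyCT, hyS⟩ := hy
      by_cases hTS : T ⊆ S
      · have : S = T := Finset.Subset.antisymm hST hTS
        subst this; exact hyCT
      · obtain ⟨x, hxT, hxS⟩ := Finset.not_subset.mp hTS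
        have hne : x ≠ y := fun h => hxS (h ▸ hyS)
        have hy' : y ∈ C (T.erase x) :=
          hsub T x y hxT (hST hyS) hne hyCT
        have hlt : T.erase x ⊂ T := Finset.erase_ssubset hxT
        have hST' : S ⊆ T.erase x := fun z hz =>
          Finset.mem_erase.mpr ⟨fun h => hxS (h ▸ hz), hST hz⟩
        exact ih _ hlt hST' (Finset.mem_inter.mpr ⟨hy', hyS⟩)
  · intro hincl S x x' hx hx' hne hx'CS
    exact hincl (S.erase x) S (Finset.erase_subset _ _)
      (Finset.mem_inter.mpr ⟨hx'CS, Finset.mem_erase.mpr ⟨hne.symm, hx'⟩⟩)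
end

section
/- A substitutable, consistent choice function satisfies path independence: C(X' ∪ X'') = C(C(X') ∪ X'') for all subsets X', X''. -/
variable {X : Type*} [DecidableEq X]

/-- Inclusion form of substitutability. -/
lemma sub_incl (C : Finset X → Finset X)
    (hchoice : ∀ S : Finset X, C S ⊆ S) (hsub : Substitutable C) :
    ∀ (n : ℕ) (S T : Finset X), T ⊆ S → (S \ T).card = n → C S ∩ T ⊆ C T := by
  intro n
  induction n with
  | zero =>
    intro S T hTS hcard
    have : S = T := by
      have : S \ T = ∅ := Finset.card_eq_zero.mp hcard
      have := Finset.sdiff_eq_empty_iff_subset.mp this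
      exact Finset.Subset.antisymm this hTS
    subst this
    exact Finset.inter_subset_left
  | succ n ih =>
    intro S T hTS hcard
    obtain ⟨x, hx⟩ : (S \ T).Nonempty := by
      rw [← Finset.card_pos, hcard]; omega
    have hxS : x ∈ S := (Finset.mem_sdiff.mp hx).1
    have hxT : x ∉ T := (Finset.mem_sdiff.mp hx).2
    have hT' : T ⊆ S.erase x := fun y hy =>
      Finset.mem_erase.mpr ⟨fun h => hxT (h ▸ hy), hTS hy⟩
    have hcard' : ((S.erase x) \ T).card = n := by
      have : (S.erase x) \ T = (S \ T).erase x := by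
        ext y; simp [Finset.mem_erase, Finset.mem_sdiff]; tauto
      rw [this, Finset.card_erase_of_mem hx, hcard]; omega
    intro y hy
    have hyC : y ∈ C S := (Finset.mem_inter.mp hy).1
    have hyT : y ∈ T := (Finset.mem_inter.mp hy).2
    have hyS : y ∈ S := hchoice S hyC
    have hxy : x ≠ y := fun h => hxT (h ▸ hyT)
    have : y ∈ C (S.erase x) := hsub S x y hxS hyS hxy hyC
    exact ih (S.erase x) T hT' hcard' (Finset.mem_inter.mpr ⟨this, hyT⟩)

/-- A substitutable, consistent choice function satisfies path independence:
`C(X' ∪ X'') = C(C(X') ∪ X'')`. -/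
theorem pathIndependent_of_substitutable (C : Finset X → Finset X)
    (hchoice : ∀ S : Finset X, C S ⊆ S)
    (hcons : Consistent C) (hsub : Substitutable C) :
    ∀ S T : Finset X, C (S ∪ T) = C (C S ∪ T) := by
  intro S T
  have hBA : C S ∪ T ⊆ S ∪ T :=
    Finset.union_subset_union (hchoice S) (le_refl T)
  have hCA : C (S ∪ T) ⊆ C S ∪ T := by
    intro x hx
    have hxA : x ∈ S ∪ T := hchoice _ hx
    rcases Finset.mem_union.mp hxA with hxS | hxT
    · have : x ∈ C S :=
        sub_incl C hchoice hsub _ (S ∪ T) S Finset.subset_union_left rfl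
          (Finset.mem_inter.mpr ⟨hx, hxS⟩)
      exact Finset.mem_union_left _ this
    · exact Finset.mem_union_right _ hxT
  exact (hcons (S ∪ T) (C S ∪ T) hCA hBA).symm
end

section
/- Let P'_a ⊑ P_a with P'_a substitutable. Then P'_a is minimal: there is no preference P''_a with P''_a ⊑ P_a and A(P''_a) strictly contained in A(P'_a), where A(Q) denotes the collection of acceptable sets of Q. -/
variable {X : Type*} [DecidableEq X]

def SubPref (C' C : Finset X → Finset X) : Prop :=
  (∀ S : Finset X, C' S = S → C S = S) ∧
  (∀ (S : Finset X) (x : X), C' S = S → x ∉ S → x ∈ C (insert x S) → x ∈ C' (insert x S))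

/-- The collection of acceptable (fixed) sets of a choice function. -/
def AccSets (C : Finset X → Finset X) : Set (Finset X) := {S | C S = S}

lemma fixed_of_subset_fixed {C' : Finset X → Finset X}
    (hC' : ∀ S : Finset X, C' S ⊆ S) (hsubst : Substitutable C') :
    ∀ S : Finset X, C' S = S → ∀ U ⊆ S, C' U = U := by
  intro S
  induction S using Finset.strongInduction with
  | _ S ih =>
    intro hS U hU
    rcases hU.eq_or_ssubset with h | hlt
    · rw [h]; exact hS
    · obtain ⟨y, hyS, hyU⟩ := Finset.exists_of_ssubset hlt
      have h1 : C' (S.erase y) = S.erase y := by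
        apply Finset.Subset.antisymm (hC' _)
        intro z hz
        have hzS : z ∈ S := Finset.mem_of_mem_erase hz
        have hzy : y ≠ z := (Finset.ne_of_mem_erase hz).symm
        exact hsubst S y z hyS hzS hzy (by rw [hS]; exact hzS)
      exact ih (S.erase y) (Finset.erase_ssubset hyS) h1 U
        (fun z hz => Finset.mem_erase.2 ⟨fun h => hyU (h ▸ hz), hU hz⟩)

/-- If `C' ⊑ C` and `C'` is substitutable, then `C'` is minimal: no sub-preference `C''`
of `C` has a collection of acceptable sets strictly contained in that of `C'`. -/
theorem substitutable_subPref_minimal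
    (C C' : Finset X → Finset X)
    (hC : ∀ S : Finset X, C S ⊆ S) (hCc : Consistent C)
    (hC' : ∀ S : Finset X, C' S ⊆ S) (hC'c : Consistent C')
    (hsub : SubPref C' C) (hsubst : Substitutable C') :
    ¬ ∃ C'' : Finset X → Finset X,
        (∀ S : Finset X, C'' S ⊆ S) ∧ Consistent C'' ∧ SubPref C'' C ∧
        AccSets C'' ⊂ AccSets C' := by
  rintro ⟨C'', hC'', hC''c, hC''sub, hss⟩
  obtain ⟨S, hS', hS''⟩ := Set.exists_of_ssubset hss
  have hSC' : C' S = S := hS'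
  set T := C'' S with hTdef
  have hTS : T ⊆ S := hC'' S
  have hTne : T ≠ S := hS''
  obtain ⟨x, hxS, hxT⟩ := Finset.exists_of_ssubset (lt_of_le_of_ne hTS hTne)
  have hT : C'' T = T := hC''c S T (le_refl _) hTS
  have hUS : insert x T ⊆ S := Finset.insert_subset hxS hTS
  have hU : C' (insert x T) = insert x T :=
    fixed_of_subset_fixed hC' hsubst S hSC' _ hUS
  have hCU : C (insert x T) = insert x T := hsub.1 _ hU
  have hxC : x ∈ C (insert x T) := by rw [hCU]; exact Finset.mem_insert_self x T
  have hx'' : x ∈ C'' (insert x T) := hC''sub.2 T x hT hxT hxC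
  have : C'' (insert x T) = T := hC''c S (insert x T) (Finset.subset_insert x T) hUS
  rw [this] at hx''
  exact hxT hx''
end

section
/- If P'_a and P''_a are both substitutable sub-preferences of the same preference P_a, then their collections of acceptable sets coincide: A(P'_a) = A(P''_a). -/
variable {X : Type*} [DecidableEq X]

/-- Two substitutable sub-preferences of the same preference have the same collection
of acceptable sets. -/
theorem acc_eq_of_substitutable_subPrefs
    (C C' C'' : Finset X → Finset X)
    (hC : ∀ S : Finset X, C S ⊆ S) (hCc : Consistent C)
    (hC' : ∀ S : Finset X, C' S ⊆ S) (hC'c : Consistent C')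
    (hC'' : ∀ S : Finset X, C'' S ⊆ S) (hC''c : Consistent C'')
    (hsub' : SubPref C' C) (hsubst' : Substitutable C')
    (hsub'' : SubPref C'' C) (hsubst'' : Substitutable C'') :
    AccSets C' = AccSets C'' := by
  have key : ∀ (D1 D2 : Finset X → Finset X),
      (∀ S, D1 S ⊆ S) → (∀ S, D2 S ⊆ S) →
      SubPref D1 C → Substitutable D1 → SubPref D2 C →
      ∀ S : Finset X, D1 S = S → D2 S = S := by
    intro D1 D2 h1 h2 hs1 hsub1 hs2 S
    induction S using Finset.strongInduction with
    | _ S ih =>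
      intro hS
      refine Finset.Subset.antisymm (h2 S) ?_
      intro x hx
      have herase : D1 (S.erase x) = S.erase x := by
        refine Finset.Subset.antisymm (h1 _) ?_
        intro y hy
        have hy' := Finset.mem_of_mem_erase hy
        have hne : x ≠ y := (Finset.ne_of_mem_erase hy).symm
        exact hsub1 S x y hx hy' hne (by rw [hS]; exact hy')
      have hD2e : D2 (S.erase x) = S.erase x :=
        ih (S.erase x) (Finset.erase_ssubset hx) herase
      have hCS : C S = S := hs1.1 S hS
      have hxC : x ∈ C (insert x (S.erase x)) := by
        rw [Finset.insert_erase hx, hCS]; exact hx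
      have := hs2.2 (S.erase x) x hD2e (Finset.notMem_erase x S) hxC
      rwa [Finset.insert_erase hx] at this
  ext S
  constructor
  · exact key C' C'' hC' hC'' hsub' hsubst' hsub'' S
  · exact key C'' C' hC'' hC' hsub'' hsubst'' hsub' S
end

section
/- If P'_a and P''_a are both substitutable sub-preferences of the same preference P_a, then they induce the same Blair comparisons on acceptable sets: for all X1, X2 ∈ A(P'_a), if X1 = C^{P'}_a(X1 ∪ X2) then X1 = C^{P''}_a(X1 ∪ X2). -/
variable {X : Type*} [DecidableEq X]

/-- A chosen element remains chosen from any subset containing it (iterated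
substitutability). -/
lemma subst_down {C : Finset X → Finset X} (hs : Substitutable C) :
    ∀ (n : ℕ) (S U : Finset X), (S \ U).card ≤ n → U ⊆ S → ∀ x ∈ U, x ∈ C S → x ∈ C U := by
  intro n
  induction n with
  | zero =>
    intro S U hcard hU x hx hxC
    have hempty : S \ U = ∅ := Finset.card_eq_zero.mp (Nat.le_zero.mp hcard)
    have hSU : S = U := by
      apply Finset.Subset.antisymm _ hU
      intro y hy
      by_contra h
      have : y ∈ S \ U := Finset.mem_sdiff.mpr ⟨hy, h⟩
      simp [hempty] at this
    rwa [← hSU]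
  | succ n ih =>
    intro S U hcard hU x hx hxC
    by_cases hSU : S ⊆ U
    · have : S = U := Finset.Subset.antisymm hSU hU
      rwa [← this]
    · obtain ⟨y, hyS, hyU⟩ := Finset.not_subset.mp hSU
      have hyx : y ≠ x := fun h => hyU (h ▸ hx)
      have hx' : x ∈ C (S.erase y) := hs S y x hyS (hU hx) hyx hxC
      apply ih (S.erase y) U _ _ x hx hx'
      · have hmem : y ∈ S \ U := Finset.mem_sdiff.mpr ⟨hyS, hyU⟩
        have : S.erase y \ U = (S \ U).erase y := by
          ext z
          simp only [Finset.mem_erase, Finset.mem_sdiff]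
          tauto
        rw [this, Finset.card_erase_of_mem hmem]
        omega
      · intro z hz
        exact Finset.mem_erase.mpr ⟨fun h => hyU (h ▸ hz), hU hz⟩

/-- Idempotence of a consistent choice function. -/
lemma choice_idem {C : Finset X → Finset X} (hC : ∀ S, C S ⊆ S) (hCc : Consistent C)
    (S : Finset X) : C (C S) = C S := hCc S (C S) (subset_refl _) (hC S)

/-- Backward characterization: if `T` is acceptable, `T ⊆ S`, and no element of
`S \ T` is chosen when added to `T`, then `C S = T`. -/
lemma choice_eq_of {C : Finset X → Finset X} (hC : ∀ S, C S ⊆ S) (hCc : Consistent C)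
    (hs : Substitutable C) {T S : Finset X} (hT : C T = T) (hTS : T ⊆ S)
    (h : ∀ z ∈ S, z ∉ T → z ∉ C (insert z T)) : C S = T := by
  have hsub : C S ⊆ T := by
    intro z hz
    by_contra hzT
    have hzS : z ∈ S := hC S hz
    have hins : insert z T ⊆ S := Finset.insert_subset hzS hTS
    have : z ∈ C (insert z T) :=
      subst_down hs (S \ insert z T).card S (insert z T) le_rfl hins z
        (Finset.mem_insert_self z T) hz
    exact h z hzS hzT this
  have := hCc S T hsub hTS
  rw [hT] at this
  exact this.symm

/-- The crux lemma: for a common acceptable set `A` of two substitutable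
sub-preferences of the same `C`, acceptance of a new element transfers. -/
lemma crux (C : Finset X → Finset X) (hCC : ∀ S, C S ⊆ S) (hCc : Consistent C) :
    ∀ n : ℕ, ∀ C1 C2 : Finset X → Finset X,
      (∀ S, C1 S ⊆ S) → Consistent C1 → Substitutable C1 → SubPref C1 C →
      (∀ S, C2 S ⊆ S) → Consistent C2 → Substitutable C2 → SubPref C2 C →
      AccSets C1 = AccSets C2 →
      ∀ A : Finset X, ∀ x : X, (insert x A).card ≤ n → C1 A = A → x ∉ A →
        x ∈ C2 (insert x A) → x ∈ C1 (insert x A) := by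
  intro n
  induction n using Nat.strong_induction_on with
  | _ n ih =>
  intro C1 C2 h1 h1c h1s hsp1 h2 h2c h2s hsp2 hacc A x hcard hA1 hxA hx2
  by_contra hx1
  set V : Finset X := insert x A with hVdef
  have hxV : x ∈ V := Finset.mem_insert_self x A
  have hAV : A ⊆ V := Finset.subset_insert x A
  have hacc12 : ∀ S : Finset X, C1 S = S → C2 S = S := by
    intro S hS
    have : S ∈ AccSets C1 := hS
    rw [hacc] at this
    exact this
  have hacc21 : ∀ S : Finset X, C2 S = S → C1 S = S := by
    intro S hS
    have : S ∈ AccSets C2 := hS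
    rw [← hacc] at this
    exact this
  have hA2 : C2 A = A := hacc12 A hA1
  have hCA : C A = A := hsp1.1 A hA1
  -- C1 V = A
  have hC1V : C1 V = A := by
    have hsub : C1 V ⊆ A := by
      intro z hz
      rcases Finset.mem_insert.mp (h1 V hz) with h | h
      · exact absurd (h ▸ hz) hx1
      · exact h
    have := h1c V A hsub hAV
    rw [hA1] at this
    exact this.symm
  -- x ∉ C V, hence C V = A
  have hxC : x ∉ C V := fun h => hx1 (hsp1.2 A x hA1 hxA h)
  have hCV : C V = A := by
    have hsub : C V ⊆ A := by
      intro z hz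
      rcases Finset.mem_insert.mp (hCC V hz) with h | h
      · exact absurd (h ▸ hz) hxC
      · exact h
    have := hCc V A hsub hAV
    rw [hCA] at this
    exact this.symm
  set T : Finset X := C2 V with hTdef
  have hxT : x ∈ T := hx2
  have hTV : T ⊆ V := h2 V
  have hT2 : C2 T = T := choice_idem h2 h2c V
  have hT1 : C1 T = T := hacc21 T hT2
  have hCT : C T = T := hsp2.1 T hT2
  by_cases hcase : ∀ z ∈ V, z ∉ T → z ∉ C1 (insert z T)
  · have : C1 V = T := choice_eq_of h1 h1c h1s hT1 hTV hcase
    rw [hC1V] at this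
    exact hxA (this ▸ hxT)
  · push_neg at hcase
    obtain ⟨z, hzV, hzT, hz1⟩ := hcase
    have hzTsub : insert z T ⊆ V := Finset.insert_subset hzV hTV
    have hC2Tz : C2 (insert z T) = T := by
      exact h2c V (insert z T) (Finset.subset_insert z T) hzTsub
    have hz2 : z ∉ C2 (insert z T) := by rw [hC2Tz]; exact hzT
    have hzC : z ∉ C (insert z T) := fun h => hz2 (hsp2.2 T z hT2 hzT h)
    have hCTz : C (insert z T) = T := by
      have hsub : C (insert z T) ⊆ T := by
        intro w hw
        rcases Finset.mem_insert.mp (hCC _ hw) with h | h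
        · exact absurd (h ▸ hw) hzC
        · exact h
      have := hCc (insert z T) T hsub (Finset.subset_insert z T)
      rw [hCT] at this
      exact this.symm
    by_cases hVz : insert z T = V
    · rw [hVz, hCV] at hCTz
      exact hxA (hCTz ▸ hxT)
    · have hss : insert z T ⊂ V := Finset.ssubset_iff_subset_ne.mpr ⟨hzTsub, hVz⟩
      have hlt : (insert z T).card < n := lt_of_lt_of_le (Finset.card_lt_card hss) hcard
      exact hz2 (ih (insert z T).card hlt C2 C1 h2 h2c h2s hsp2 h1 h1c h1s hsp1 hacc.symm
        T z le_rfl hT2 hzT hz1)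

/-- Two substitutable sub-preferences of the same preference induce the same Blair
comparisons on acceptable sets: for `X1, X2 ∈ A(P')`, if `X1 = C'(X1 ∪ X2)` then
`X1 = C''(X1 ∪ X2)`. (We assume, as previously established, that `A(P') = A(P'')`.) -/
theorem blair_eq_of_substitutable_subPrefs
    (C C' C'' : Finset X → Finset X)
    (hC : ∀ S : Finset X, C S ⊆ S) (hCc : Consistent C)
    (hC' : ∀ S : Finset X, C' S ⊆ S) (hC'c : Consistent C')
    (hC'' : ∀ S : Finset X, C'' S ⊆ S) (hC''c : Consistent C'')
    (hsub' : SubPref C' C) (hsubst' : Substitutable C')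
    (hsub'' : SubPref C'' C) (hsubst'' : Substitutable C'')
    (hacc : AccSets C' = AccSets C'') :
    ∀ X1 X2 : Finset X, X1 ∈ AccSets C' → X2 ∈ AccSets C' →
      C' (X1 ∪ X2) = X1 → C'' (X1 ∪ X2) = X1 := by
  intro X1 X2 hX1 _hX2 hC'eq
  have hX1' : C' X1 = X1 := hX1
  have hX1'' : C'' X1 = X1 := by
    have : X1 ∈ AccSets C' := hX1
    rw [hacc] at this
    exact this
  apply choice_eq_of hC'' hC''c hsubst'' hX1'' Finset.subset_union_left
  intro z hzU hzX1 hz2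
  have hz1 : z ∈ C' (insert z X1) :=
    crux C hC hCc (insert z X1).card C' C'' hC' hC'c hsubst' hsub'
      hC'' hC''c hsubst'' hsub'' hacc X1 z le_rfl hX1' hzX1 hz2
  have hC'z : C' (insert z X1) = X1 := by
    have hsub : C' (X1 ∪ X2) ⊆ insert z X1 := by
      rw [hC'eq]; exact Finset.subset_insert z X1
    have hins : insert z X1 ⊆ X1 ∪ X2 :=
      Finset.insert_subset hzU Finset.subset_union_left
    have := hC'c (X1 ∪ X2) (insert z X1) hsub hins
    rw [hC'eq] at this
    exact this
  exact hzX1 (hC'z ▸ hz1)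
end
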